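/- arXiv:2409.02052 — 5 statements merged into one kernel-verified Lean document; each statement's English description precedes it below -/
import Mathlib

section
/- Let m be a positive integer and let a_1,…,a_m and b_1,…,b_m be real numbers such that a_l = 0 and b_l = 0 whenever l is even. Define f(θ) = ∑_{l=1}^m ( a_l·cos(π l θ) + b_l·sin(π l θ) ). Then for every odd positive integer r ≤ m and every s ∈ {−1, 1}, ∫_{−1}^{1} f(θ)·max(s·cos(π r θ), 0) dθ = s·a_r/2. -/
open Real MeasureTheory intervalIntegral

lemma sin_pi_mul_int (k : ℤ) : Real.sin (π * k) = 0 := by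
  rw [mul_comm]; exact Real.sin_int_mul_pi k

lemma cos_intK (c : ℝ) (hc : c ≠ 0) (hsc : Real.sin c = 0) :
    ∫ θ in (-1:ℝ)..1, Real.cos (c * θ) = 0 := by
  rw [integral_comp_mul_left (fun x => Real.cos x) hc, integral_cos]
  simp [hsc]

-- odd integrand over [-1,1]
lemma odd_int (g : ℝ → ℝ) (hg : Continuous g) (hodd : ∀ θ, g (-θ) = -g θ) :
    ∫ θ in (-1:ℝ)..1, g θ = 0 := by
  have h1 : ∫ θ in (-1:ℝ)..0, g θ = ∫ θ in (0:ℝ)..1, g (-θ) := by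
    rw [integral_comp_neg]; norm_num
  have h2 : ∫ θ in (0:ℝ)..1, g (-θ) = -∫ θ in (0:ℝ)..1, g θ := by
    simp only [hodd]; rw [intervalIntegral.integral_neg]
  rw [← integral_add_adjacent_intervals (a := (-1:ℝ)) (b := 0) (c := 1)
    (hg.intervalIntegrable _ _) (hg.intervalIntegrable _ _), h1, h2]
  ring

-- anti-periodic integrand over [-1,1]
lemma antiper_int (g : ℝ → ℝ) (hg : Continuous g) (hap : ∀ θ, g (θ - 1) = -g θ) :
    ∫ θ in (-1:ℝ)..1, g θ = 0 := by
  have h1 : ∫ θ in (-1:ℝ)..0, g θ = ∫ θ in (0:ℝ)..1, g (θ - 1) := by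
    rw [integral_comp_sub_right]; norm_num
  have h2 : ∫ θ in (0:ℝ)..1, g (θ - 1) = -∫ θ in (0:ℝ)..1, g θ := by
    simp only [hap]; rw [intervalIntegral.integral_neg]
  rw [← integral_add_adjacent_intervals (a := (-1:ℝ)) (b := 0) (c := 1)
    (hg.intervalIntegrable _ _) (hg.intervalIntegrable _ _), h1, h2]
  ring

-- orthogonality of cosines
lemma cos_cos_int (l r : ℕ) (hl : 0 < l) (hr : 0 < r) :
    ∫ θ in (-1:ℝ)..1, Real.cos (π * l * θ) * Real.cos (π * r * θ)
      = if l = r then 1 else 0 := by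
  have h1 : ∀ θ : ℝ, (π * ((l:ℝ) - r)) * θ = π * l * θ - π * r * θ := fun θ => by ring
  have h2 : ∀ θ : ℝ, (π * ((l:ℝ) + r)) * θ = π * l * θ + π * r * θ := fun θ => by ring
  have key : ∀ θ : ℝ, Real.cos (π * l * θ) * Real.cos (π * r * θ)
      = (Real.cos ((π * ((l:ℝ) - r)) * θ) + Real.cos ((π * ((l:ℝ) + r)) * θ)) / 2 := by
    intro θ; rw [h1, h2, Real.cos_sub, Real.cos_add]; ring
  simp only [key]
  rw [intervalIntegral.integral_div,
    intervalIntegral.integral_add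
      ((by continuity : Continuous fun θ:ℝ => Real.cos ((π * ((l:ℝ) - r)) * θ)).intervalIntegrable _ _)
      ((by continuity : Continuous fun θ:ℝ => Real.cos ((π * ((l:ℝ) + r)) * θ)).intervalIntegrable _ _)]
  have hsum : ∫ θ in (-1:ℝ)..1, Real.cos ((π * ((l:ℝ) + r)) * θ) = 0 := by
    apply cos_intK _ (by positivity)
    have : π * ((l:ℝ) + r) = π * (((l:ℤ) + r : ℤ) : ℝ) := by push_cast; ring
    rw [this]; exact sin_pi_mul_int _
  by_cases h : l = r
  · subst h
    have hz : π * ((l:ℝ) - l) = 0 := by ring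
    simp [hz, hsum]
  · have hd : π * ((l:ℝ) - r) ≠ 0 := by
      apply mul_ne_zero Real.pi_ne_zero
      intro hc
      apply h
      have : (l:ℝ) = r := by linarith
      exact_mod_cast this
    have hdiff : ∫ θ in (-1:ℝ)..1, Real.cos ((π * ((l:ℝ) - r)) * θ) = 0 := by
      apply cos_intK _ hd
      have : π * ((l:ℝ) - r) = π * (((l:ℤ) - r : ℤ) : ℝ) := by push_cast; ring
      rw [this]; exact sin_pi_mul_int _
    simp [hdiff, hsum, h]

-- sin * cos orthogonality (oddness)
lemma sin_cos_int (l r : ℕ) :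
    ∫ θ in (-1:ℝ)..1, Real.sin (π * l * θ) * Real.cos (π * r * θ) = 0 := by
  apply odd_int _ (by continuity)
  intro θ
  rw [mul_neg, mul_neg, Real.sin_neg, Real.cos_neg]
  ring

-- sin * |cos| orthogonality (oddness)
lemma sin_abscos_int (l r : ℕ) :
    ∫ θ in (-1:ℝ)..1, Real.sin (π * l * θ) * |Real.cos (π * r * θ)| = 0 := by
  apply odd_int _ (by continuity)
  intro θ
  rw [mul_neg, mul_neg, Real.sin_neg, Real.cos_neg]
  ring

-- cos * |cos| for odd frequencies: anti-periodicity
lemma cos_abscos_int (l r : ℕ) (hl : Odd l) (hr : Odd r) :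
    ∫ θ in (-1:ℝ)..1, Real.cos (π * l * θ) * |Real.cos (π * r * θ)| = 0 := by
  apply antiper_int _ (by continuity)
  intro θ
  have hcl : Real.cos (π * l * (θ - 1)) = -Real.cos (π * l * θ) := by
    have h2 : π * l * (θ - 1) = -((l:ℕ) * π - π * l * θ) := by ring
    rw [h2, Real.cos_neg, Real.cos_nat_mul_pi_sub, hl.neg_one_pow]; ring
  have hcr : Real.cos (π * r * (θ - 1)) = -Real.cos (π * r * θ) := by
    have h2 : π * r * (θ - 1) = -((r:ℕ) * π - π * r * θ) := by ring
    rw [h2, Real.cos_neg, Real.cos_nat_mul_pi_sub, hr.neg_one_pow]; ring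
  rw [hcl, hcr, abs_neg]
  ring

/-- Correlation of a trigonometric polynomial supported on odd frequencies with a
sign-flipped ReLU cosine feature: for odd `r ≤ m` and `s ∈ {−1,1}`,
`∫_{−1}^{1} f(θ) · max(s·cos(π r θ), 0) dθ = s · a_r / 2`. -/
theorem relu_cos_feature_correlation
    (m : ℕ) (hm : 0 < m) (a b : ℕ → ℝ)
    (hvanish : ∀ l ∈ Finset.Icc 1 m, Even l → a l = 0 ∧ b l = 0)
    (f : ℝ → ℝ)
    (hf : ∀ θ : ℝ, f θ =
      ∑ l ∈ Finset.Icc 1 m, (a l * Real.cos (π * l * θ) + b l * Real.sin (π * l * θ)))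
    (r : ℕ) (hr : Odd r) (hr0 : 0 < r) (hrm : r ≤ m)
    (s : ℝ) (hs : s = 1 ∨ s = -1) :
    ∫ θ in (-1 : ℝ)..1, f θ * max (s * Real.cos (π * r * θ)) 0 = s * a r / 2 := by
  set F : ℝ → ℝ := fun θ =>
    ∑ l ∈ Finset.Icc 1 m, (a l * Real.cos (π * l * θ) + b l * Real.sin (π * l * θ)) with hF
  have hFcont : Continuous F := by
    apply continuous_finset_sum
    intro l _
    fun_prop
  have hmax : ∀ t : ℝ, max (s * t) 0 = (s * t + |t|) / 2 := by
    intro t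
    rcases hs with hs | hs <;> subst hs <;> rcases le_total 0 t with h | h
    · rw [one_mul, max_eq_left h, abs_of_nonneg h]; ring
    · rw [one_mul, max_eq_right h, abs_of_nonpos h]; ring
    · rw [max_eq_right (by nlinarith), abs_of_nonneg h]; ring
    · rw [max_eq_left (by nlinarith), abs_of_nonpos h]; ring
  have hrw : ∀ θ : ℝ, f θ * max (s * Real.cos (π * r * θ)) 0
      = s / 2 * (F θ * Real.cos (π * r * θ)) + 1 / 2 * (F θ * |Real.cos (π * r * θ)|) := by
    intro θ
    rw [hf θ, hmax]
    ring
  simp only [hrw]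
  have hi1 : IntervalIntegrable (fun θ => s / 2 * (F θ * Real.cos (π * r * θ)))
      volume (-1) 1 := by
    apply Continuous.intervalIntegrable
    exact continuous_const.mul (hFcont.mul (by fun_prop))
  have hi2 : IntervalIntegrable (fun θ => 1 / 2 * (F θ * |Real.cos (π * r * θ)|))
      volume (-1) 1 := by
    apply Continuous.intervalIntegrable
    exact continuous_const.mul (hFcont.mul (by fun_prop))
  rw [intervalIntegral.integral_add hi1 hi2, intervalIntegral.integral_const_mul,
    intervalIntegral.integral_const_mul]
  -- First integral: F · cos = a r
  have hA : ∫ θ in (-1:ℝ)..1, F θ * Real.cos (π * r * θ) = a r := by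
    have hexp : ∀ θ : ℝ, F θ * Real.cos (π * r * θ)
        = ∑ l ∈ Finset.Icc 1 m, (a l * (Real.cos (π * l * θ) * Real.cos (π * r * θ))
            + b l * (Real.sin (π * l * θ) * Real.cos (π * r * θ))) := by
      intro θ
      rw [hF, Finset.sum_mul]
      apply Finset.sum_congr rfl
      intro l _
      ring
    simp only [hexp]
    rw [intervalIntegral.integral_finset_sum]
    · have hterm : ∀ l ∈ Finset.Icc 1 m,
          (∫ θ in (-1:ℝ)..1, (a l * (Real.cos (π * l * θ) * Real.cos (π * r * θ))
            + b l * (Real.sin (π * l * θ) * Real.cos (π * r * θ))))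
          = if l = r then a l else 0 := by
        intro l hl
        rw [intervalIntegral.integral_add
            ((by fun_prop : Continuous fun θ:ℝ => a l * (Real.cos (π * l * θ) * Real.cos (π * r * θ))).intervalIntegrable _ _)
            ((by fun_prop : Continuous fun θ:ℝ => b l * (Real.sin (π * l * θ) * Real.cos (π * r * θ))).intervalIntegrable _ _),
          intervalIntegral.integral_const_mul, intervalIntegral.integral_const_mul,
          cos_cos_int l r (Finset.mem_Icc.mp hl).1 hr0, sin_cos_int l r]
        by_cases h : l = r <;> simp [h]
      rw [Finset.sum_congr rfl hterm, Finset.sum_ite_eq' (Finset.Icc 1 m) r a,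
        if_pos (Finset.mem_Icc.mpr ⟨hr0, hrm⟩)]
    · intro l _
      apply Continuous.intervalIntegrable
      fun_prop
  -- Second integral: F · |cos| = 0
  have hB : ∫ θ in (-1:ℝ)..1, F θ * |Real.cos (π * r * θ)| = 0 := by
    have hexp : ∀ θ : ℝ, F θ * |Real.cos (π * r * θ)|
        = ∑ l ∈ Finset.Icc 1 m, (a l * (Real.cos (π * l * θ) * |Real.cos (π * r * θ)|)
            + b l * (Real.sin (π * l * θ) * |Real.cos (π * r * θ)|)) := by
      intro θ
      rw [hF, Finset.sum_mul]
      apply Finset.sum_congr rfl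
      intro l _
      ring
    simp only [hexp]
    rw [intervalIntegral.integral_finset_sum]
    · apply Finset.sum_eq_zero
      intro l hl
      rw [intervalIntegral.integral_add
          ((by fun_prop : Continuous fun θ:ℝ => a l * (Real.cos (π * l * θ) * |Real.cos (π * r * θ)|)).intervalIntegrable _ _)
          ((by fun_prop : Continuous fun θ:ℝ => b l * (Real.sin (π * l * θ) * |Real.cos (π * r * θ)|)).intervalIntegrable _ _),
        intervalIntegral.integral_const_mul, intervalIntegral.integral_const_mul,
        sin_abscos_int l r]
      rcases Nat.even_or_odd l with he | ho
      · rw [(hvanish l hl he).1]; ring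
      · rw [cos_abscos_int l r ho hr]; ring
    · intro l _
      apply Continuous.intervalIntegrable
      fun_prop
  rw [hA, hB]
  ring
end

section
/- Let l be an odd positive integer, r any positive integer, and s ∈ {−1, 1}. Then ∫_{−1}^{1} cos(π l θ)·max(s·cos(π r θ), 0) dθ equals s/2 if l = r, and equals 0 if l ≠ r. -/
open Real

lemma aux_int_cos (m : ℤ) (hm : m ≠ 0) :
    (∫ θ in (-1 : ℝ)..1, Real.cos (π * m * θ)) = 0 := by
  have hc : (π * (m : ℝ)) ≠ 0 :=
    mul_ne_zero Real.pi_ne_zero (Int.cast_ne_zero.mpr hm)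
  have h : (∫ θ in (-1 : ℝ)..1, Real.cos (π * m * θ))
      = ∫ θ in (-1 : ℝ)..1, Real.cos ((π * m) * θ) := by
    simp [mul_assoc]
  rw [h, intervalIntegral.integral_comp_mul_left Real.cos hc]
  have h1 : Real.sin (π * m) = 0 := by
    rw [mul_comm]; exact Real.sin_int_mul_pi m
  simp [integral_cos, Real.sin_neg, h1]

lemma aux_cos_cos (l r : ℕ) (hl0 : 0 < l) (hr0 : 0 < r) :
    (∫ θ in (-1 : ℝ)..1, Real.cos (π * l * θ) * Real.cos (π * r * θ))
      = if l = r then 1 else 0 := by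
  set m1 : ℤ := (l : ℤ) - r with hm1
  set m2 : ℤ := (l : ℤ) + r with hm2
  have key : ∀ θ : ℝ, Real.cos (π * l * θ) * Real.cos (π * r * θ)
      = (Real.cos (π * (m1 : ℝ) * θ) + Real.cos (π * (m2 : ℝ) * θ)) / 2 := by
    intro θ
    have e1 : (π * (m1 : ℝ) * θ : ℝ) = π * l * θ - π * r * θ := by
      rw [hm1]; push_cast; ring
    have e2 : (π * (m2 : ℝ) * θ : ℝ) = π * l * θ + π * r * θ := by
      rw [hm2]; push_cast; ring
    rw [e1, e2, Real.cos_sub, Real.cos_add]; ring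
  simp only [key]
  have hint : ∀ m : ℤ, IntervalIntegrable (fun θ : ℝ => Real.cos (π * m * θ))
      MeasureTheory.volume (-1) 1 := by
    intro m; exact (Real.continuous_cos.comp (by continuity)).intervalIntegrable _ _
  rw [intervalIntegral.integral_div, intervalIntegral.integral_add (hint _) (hint _)]
  have hsum : (∫ θ in (-1 : ℝ)..1, Real.cos (π * (m2 : ℝ) * θ)) = 0 :=
    aux_int_cos _ (by omega)
  by_cases h : l = r
  · have hm10 : m1 = 0 := by omega
    have : (∫ θ in (-1 : ℝ)..1, Real.cos (π * (m1 : ℝ) * θ)) = 2 := by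
      rw [hm10]; simp; norm_num
    rw [this, hsum]; norm_num [h]
  · have : (∫ θ in (-1 : ℝ)..1, Real.cos (π * (m1 : ℝ) * θ)) = 0 :=
      aux_int_cos _ (by omega)
    rw [this, hsum]; norm_num [h]

lemma aux_cos_abs (l r : ℕ) (hl : Odd l) :
    (∫ θ in (-1 : ℝ)..1, Real.cos (π * l * θ) * |Real.cos (π * r * θ)|) = 0 := by
  set f : ℝ → ℝ := fun θ => Real.cos (π * l * θ) * |Real.cos (π * r * θ)| with hf
  have hcont : Continuous f := by
    apply Continuous.mul
    · exact Real.continuous_cos.comp (by continuity)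
    · exact (Real.continuous_cos.comp (by continuity)).abs
  have hshift : ∀ x : ℝ, f (x + 1) = -f x := by
    intro x
    have e1 : π * l * (x + 1) = π * l * x + (l : ℕ) * π := by push_cast; ring
    have e2 : π * r * (x + 1) = π * r * x + (r : ℕ) * π := by push_cast; ring
    have c1 : Real.cos (π * l * (x + 1)) = -Real.cos (π * l * x) := by
      rw [e1, Real.cos_add_nat_mul_pi, hl.neg_one_pow]; ring
    have c2 : |Real.cos (π * r * (x + 1))| = |Real.cos (π * r * x)| := by
      rw [e2, Real.cos_add_nat_mul_pi, abs_mul, abs_pow, abs_neg, abs_one, one_pow, one_mul]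
    simp only [hf, c1, c2]; ring
  have hsplit : (∫ θ in (-1 : ℝ)..1, f θ)
      = (∫ θ in (-1 : ℝ)..0, f θ) + ∫ θ in (0 : ℝ)..1, f θ := by
    rw [intervalIntegral.integral_add_adjacent_intervals
      (hcont.intervalIntegrable _ _) (hcont.intervalIntegrable _ _)]
  have h2 : (∫ θ in (0 : ℝ)..1, f θ) = -∫ θ in (-1 : ℝ)..0, f θ := by
    have hthis : (∫ x in (-1 : ℝ)..0, f (x + 1)) = ∫ x in (0 : ℝ)..1, f x := by
      rw [intervalIntegral.integral_comp_add_right]; norm_num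
    rw [← hthis]
    simp only [hshift]
    rw [intervalIntegral.integral_neg]
  rw [hsplit, h2]; ring

/-- Cosine–cosine building block: for odd `l`, any positive `r`, and `s ∈ {−1,1}`,
`∫_{−1}^{1} cos(π l θ) · max(s·cos(π r θ), 0) dθ` equals `s/2` if `l = r` and `0` otherwise. -/
theorem cos_relu_cos_integral
    (l r : ℕ) (hl : Odd l) (hl0 : 0 < l) (hr0 : 0 < r)
    (s : ℝ) (hs : s = 1 ∨ s = -1) :
    (∫ θ in (-1 : ℝ)..1, Real.cos (π * l * θ) * max (s * Real.cos (π * r * θ)) 0)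
      = if l = r then s / 2 else 0 := by
  have habs : |s| = 1 := by rcases hs with h | h <;> simp [h]
  have key : ∀ θ : ℝ, Real.cos (π * l * θ) * max (s * Real.cos (π * r * θ)) 0
      = (s * (Real.cos (π * l * θ) * Real.cos (π * r * θ))
          + Real.cos (π * l * θ) * |Real.cos (π * r * θ)|) / 2 := by
    intro θ
    have hmax : max (s * Real.cos (π * r * θ)) 0
        = (s * Real.cos (π * r * θ) + |s * Real.cos (π * r * θ)|) / 2 := by
      rcases le_total (s * Real.cos (π * r * θ)) 0 with h | h
      · rw [max_eq_right h, abs_of_nonpos h]; ring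
      · rw [max_eq_left h, abs_of_nonneg h]; ring
    rw [hmax, abs_mul, habs, one_mul]; ring
  simp only [key]
  have h1 : IntervalIntegrable
      (fun θ : ℝ => s * (Real.cos (π * l * θ) * Real.cos (π * r * θ)))
      MeasureTheory.volume (-1) 1 := by
    apply Continuous.intervalIntegrable
    exact continuous_const.mul ((Real.continuous_cos.comp (by continuity)).mul
      (Real.continuous_cos.comp (by continuity)))
  have h2 : IntervalIntegrable
      (fun θ : ℝ => Real.cos (π * l * θ) * |Real.cos (π * r * θ)|)
      MeasureTheory.volume (-1) 1 := by
    apply Continuous.intervalIntegrable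
    exact (Real.continuous_cos.comp (by continuity)).mul
      (Real.continuous_cos.comp (by continuity)).abs
  rw [intervalIntegral.integral_div, intervalIntegral.integral_add h1 h2,
    intervalIntegral.integral_const_mul, aux_cos_cos l r hl0 hr0, aux_cos_abs l r hl]
  by_cases h : l = r <;> simp [h]
end

section
/- Let l and r be positive integers and s ∈ {−1, 1}. Then ∫_{−1}^{1} sin(π l θ)·max(s·sin(π r θ), 0) dθ equals s/2 if l = r, and equals 0 if l ≠ r. -/
open Real
set_option maxHeartbeats 1000000

lemma cos_int_integral (k : ℤ) (hk : k ≠ 0) :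
    (∫ θ in (-1:ℝ)..1, Real.cos (π * k * θ)) = 0 := by
  have hc : (π * k : ℝ) ≠ 0 :=
    mul_ne_zero Real.pi_ne_zero (Int.cast_ne_zero.mpr hk)
  have h0 : Real.sin (π * k) = 0 := by rw [mul_comm]; exact Real.sin_int_mul_pi k
  have h := intervalIntegral.integral_comp_mul_left (a := (-1:ℝ)) (b := 1)
    (f := Real.cos) (c := π * k) hc
  simp only [mul_assoc] at h ⊢
  rw [h, integral_cos,
    show π * ((k:ℝ) * 1) = π * k from by ring,
    show π * ((k:ℝ) * (-1)) = -(π * k) from by ring, Real.sin_neg, h0]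
  simp

lemma sin_sin_integral (l r : ℕ) (hl0 : 0 < l) (hr0 : 0 < r) :
    (∫ θ in (-1:ℝ)..1, Real.sin (π * l * θ) * Real.sin (π * r * θ))
      = if l = r then 1 else 0 := by
  have key : ∀ θ : ℝ, Real.sin (π * l * θ) * Real.sin (π * r * θ)
      = (Real.cos (π * (((l:ℤ) - r : ℤ) : ℝ) * θ) - Real.cos (π * (((l:ℤ) + r : ℤ) : ℝ) * θ)) / 2 := by
    intro θ
    have h := Real.cos_sub_cos (π * (((l:ℤ) - r : ℤ) : ℝ) * θ) (π * (((l:ℤ) + r : ℤ) : ℝ) * θ)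
    have e1 : (π * (((l:ℤ) - r : ℤ) : ℝ) * θ + π * (((l:ℤ) + r : ℤ) : ℝ) * θ) / 2 = π * l * θ := by
      push_cast; ring
    have e2 : (π * (((l:ℤ) - r : ℤ) : ℝ) * θ - π * (((l:ℤ) + r : ℤ) : ℝ) * θ) / 2 = -(π * r * θ) := by
      push_cast; ring
    rw [e1, e2, Real.sin_neg] at h
    linarith
  rw [intervalIntegral.integral_congr (fun θ _ => key θ)]
  have hsum : ((l:ℤ) + r) ≠ 0 := by positivity
  have i1 : IntervalIntegrable (fun θ : ℝ => Real.cos (π * (((l:ℤ) - r : ℤ) : ℝ) * θ))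
      MeasureTheory.volume (-1) 1 := (Continuous.intervalIntegrable (by fun_prop) _ _)
  have i2 : IntervalIntegrable (fun θ : ℝ => Real.cos (π * (((l:ℤ) + r : ℤ) : ℝ) * θ))
      MeasureTheory.volume (-1) 1 := (Continuous.intervalIntegrable (by fun_prop) _ _)
  simp only [div_eq_mul_inv]
  rw [intervalIntegral.integral_mul_const, intervalIntegral.integral_sub i1 i2,
    cos_int_integral _ hsum]
  by_cases h : l = r
  · subst h
    simp only [sub_self, Int.cast_zero, mul_zero, zero_mul, Real.cos_zero]
    norm_num
  · have hdiff : ((l:ℤ) - r) ≠ 0 := by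
      simp only [ne_eq, sub_eq_zero]; exact_mod_cast h
    rw [cos_int_integral _ hdiff]
    simp [h]

lemma sin_abs_sin_integral (l r : ℕ) :
    (∫ θ in (-1:ℝ)..1, Real.sin (π * l * θ) * |Real.sin (π * r * θ)|) = 0 := by
  set f : ℝ → ℝ := fun θ => Real.sin (π * l * θ) * |Real.sin (π * r * θ)| with hf
  have hodd : ∀ x, f (-x) = -f x := by
    intro x
    simp only [f, mul_neg, Real.sin_neg, abs_neg, neg_mul]
  have h := intervalIntegral.integral_comp_neg (a := (-1:ℝ)) (b := 1) (f := f)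
  simp only [neg_neg] at h
  have h2 : (∫ x in (-1:ℝ)..1, f (-x)) = -∫ x in (-1:ℝ)..1, f x := by
    simp_rw [hodd]; exact intervalIntegral.integral_neg
  rw [h2] at h
  linarith

/-- Sine–sine building block: for positive integers `l, r` and `s ∈ {−1,1}`,
`∫_{−1}^{1} sin(π l θ) · max(s·sin(π r θ), 0) dθ` equals `s/2` if `l = r` and `0` otherwise. -/
theorem sin_relu_sin_integral
    (l r : ℕ) (hl0 : 0 < l) (hr0 : 0 < r)
    (s : ℝ) (hs : s = 1 ∨ s = -1) :
    (∫ θ in (-1 : ℝ)..1, Real.sin (π * l * θ) * max (s * Real.sin (π * r * θ)) 0)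
      = if l = r then s / 2 else 0 := by
  have hmax : ∀ y : ℝ, max (s * y) 0 = (s * y + |y|) / 2 := by
    intro y
    have habs : |s * y| = |y| := by
      rcases hs with h | h <;> simp [h, abs_neg]
    rcases le_total (s * y) 0 with h | h
    · rw [max_eq_right h, ← habs, abs_of_nonpos h]; ring
    · rw [max_eq_left h, ← habs, abs_of_nonneg h]; ring
  have key : ∀ θ : ℝ, Real.sin (π * l * θ) * max (s * Real.sin (π * r * θ)) 0
      = s / 2 * (Real.sin (π * l * θ) * Real.sin (π * r * θ))
        + (1 / 2) * (Real.sin (π * l * θ) * |Real.sin (π * r * θ)|) := by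
    intro θ; rw [hmax]; ring
  rw [intervalIntegral.integral_congr (fun θ _ => key θ)]
  have c1 : Continuous fun θ : ℝ => Real.sin (π * l * θ) := by fun_prop
  have c2 : Continuous fun θ : ℝ => Real.sin (π * r * θ) := by fun_prop
  have i1 : IntervalIntegrable
      (fun θ : ℝ => s / 2 * (Real.sin (π * l * θ) * Real.sin (π * r * θ)))
      MeasureTheory.volume (-1) 1 :=
    (Continuous.intervalIntegrable (continuous_const.mul (c1.mul c2)) _ _)
  have i2 : IntervalIntegrable
      (fun θ : ℝ => (1 / 2) * (Real.sin (π * l * θ) * |Real.sin (π * r * θ)|))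
      MeasureTheory.volume (-1) 1 :=
    (Continuous.intervalIntegrable (continuous_const.mul (c1.mul c2.abs)) _ _)
  rw [intervalIntegral.integral_add i1 i2, intervalIntegral.integral_const_mul,
    intervalIntegral.integral_const_mul, sin_sin_integral l r hl0 hr0,
    sin_abs_sin_integral l r]
  by_cases h : l = r <;> simp [h]
end

section
/- Let l be an odd positive integer, r any positive integer, and s ∈ {−1, 1}. Then ∫_{−1}^{1} cos(π l θ)·max(s·sin(π r θ), 0) dθ = 0. -/
open Real intervalIntegral

lemma sin_two_pi_int_integral (j : ℤ) :
    ∫ x in (0:ℝ)..1, Real.sin (2 * π * j * x) = 0 := by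
  rcases eq_or_ne (j : ℝ) 0 with hj | hj
  · simp [hj]
  · have hc : (2 * π * j : ℝ) ≠ 0 := by
      exact mul_ne_zero (mul_ne_zero (by norm_num : (2:ℝ) ≠ 0) Real.pi_ne_zero) hj
    have h := intervalIntegral.integral_comp_mul_left (a := (0:ℝ)) (b := 1)
      (fun x => Real.sin x) hc
    simp only [mul_zero, mul_one] at h
    rw [h, integral_sin, Real.cos_zero]
    have : Real.cos (2 * π * j) = 1 := by
      rw [show (2 * π * (j:ℝ)) = (j:ℝ) * (2 * π) by ring, Real.cos_int_mul_two_pi]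
    rw [this]
    simp

lemma sin_pi_even_integral (m : ℤ) (hm : Even m) :
    ∫ x in (0:ℝ)..1, Real.sin (π * m * x) = 0 := by
  obtain ⟨j, hj⟩ := hm
  have : ∀ x : ℝ, π * (m:ℝ) * x = 2 * π * (j:ℝ) * x := by
    intro x; rw [hj]; push_cast; ring
  simp only [this]
  exact sin_two_pi_int_integral j

/-- Cross-term vanishing: for odd `l`, any positive `r`, and `s ∈ {−1,1}`,
`∫_{−1}^{1} cos(π l θ) · max(s·sin(π r θ), 0) dθ = 0`. -/
theorem cos_relu_sin_integral
    (l r : ℕ) (hl : Odd l) (hl0 : 0 < l) (hr0 : 0 < r)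
    (s : ℝ) (hs : s = 1 ∨ s = -1) :
    (∫ θ in (-1 : ℝ)..1, Real.cos (π * l * θ) * max (s * Real.sin (π * r * θ)) 0) = 0 := by
  set f : ℝ → ℝ := fun θ => Real.cos (π * l * θ) * max (s * Real.sin (π * r * θ)) 0 with hf_def
  have hcont : Continuous f := by
    apply Continuous.mul
    · fun_prop
    · exact ((continuous_const.mul (by fun_prop)).max continuous_const)
  have hi : ∀ a b : ℝ, IntervalIntegrable f MeasureTheory.volume a b :=
    fun a b => hcont.intervalIntegrable a b
  have hsplit : (∫ θ in (-1:ℝ)..1, f θ) = (∫ θ in (-1:ℝ)..0, f θ) + ∫ θ in (0:ℝ)..1, f θ :=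
    (integral_add_adjacent_intervals (hi _ _) (hi _ _)).symm
  have hshift : (∫ θ in (-1:ℝ)..0, f θ) = ∫ θ in (0:ℝ)..1, f (θ - 1) := by
    rw [intervalIntegral.integral_comp_sub_right f 1]; norm_num
  have hfp : ∀ θ : ℝ, f (θ - 1)
      = -(Real.cos (π * l * θ) * max (s * ((-1:ℝ)^r * Real.sin (π * r * θ))) 0) := by
    intro θ
    have h1 : π * l * (θ - 1) = π * l * θ - l * π := by ring
    have h2 : π * r * (θ - 1) = π * r * θ - r * π := by ring
    simp only [hf_def, h1, h2, Real.cos_sub_nat_mul_pi, Real.sin_sub_nat_mul_pi,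
      hl.neg_one_pow]
    ring
  rcases Nat.even_or_odd r with hre | hro
  · -- r even: f (θ - 1) = - f θ
    have h1 : ∀ θ : ℝ, f (θ - 1) = -f θ := by
      intro θ; rw [hfp θ, hre.neg_one_pow, hf_def]; ring_nf
    rw [hsplit, hshift]
    simp only [h1]
    rw [intervalIntegral.integral_neg]
    ring
  · -- r odd
    have h1 : ∀ θ : ℝ, f (θ - 1)
        = -(Real.cos (π * l * θ) * max (-(s * Real.sin (π * r * θ))) 0) := by
      intro θ; rw [hfp θ, hro.neg_one_pow]; ring_nf
    have hg : Continuous fun θ : ℝ => f (θ - 1) := hcont.comp (by fun_prop)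
    rw [hsplit, hshift,
      ← intervalIntegral.integral_add (hg.intervalIntegrable _ _) (hi _ _)]
    have h2 : ∀ θ : ℝ, f (θ - 1) + f θ
        = Real.cos (π * l * θ) * (s * Real.sin (π * r * θ)) := by
      intro θ
      rw [h1 θ, hf_def]
      have := max_zero_sub_max_neg_zero_eq_self (s * Real.sin (π * r * θ))
      simp only []
      linear_combination Real.cos (π * l * θ) * this
    simp only [h2]
    -- product to sum
    have he1 : Even ((r:ℤ) + l) := (Int.odd_coe_nat r |>.mpr hro).add_odd
      ((Int.odd_coe_nat l).mpr hl)
    have he2 : Even ((r:ℤ) - l) := (Int.odd_coe_nat r |>.mpr hro).sub_odd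
      ((Int.odd_coe_nat l).mpr hl)
    have hp : ∀ θ : ℝ, Real.cos (π * l * θ) * (s * Real.sin (π * r * θ))
        = s/2 * Real.sin (π * (((r:ℤ) + l : ℤ) : ℝ) * θ)
          + s/2 * Real.sin (π * (((r:ℤ) - l : ℤ) : ℝ) * θ) := by
      intro θ
      have e1 : π * (((r:ℤ) + l : ℤ) : ℝ) * θ = π * r * θ + π * l * θ := by push_cast; ring
      have e2 : π * (((r:ℤ) - l : ℤ) : ℝ) * θ = π * r * θ - π * l * θ := by push_cast; ring
      rw [e1, e2, Real.sin_add, Real.sin_sub]; ring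
    simp only [hp]
    rw [intervalIntegral.integral_add (by apply Continuous.intervalIntegrable; fun_prop)
      (by apply Continuous.intervalIntegrable; fun_prop),
      intervalIntegral.integral_const_mul, intervalIntegral.integral_const_mul,
      sin_pi_even_integral _ he1, sin_pi_even_integral _ he2]
    ring
end

section
/- Let h : [−1, 1] → ℝ be continuous and let a be a positive integer. Then ∫_{−1}^{1} h(sin(π a θ))·sin(π a θ) dθ = (2/π)·∫_{−1}^{1} x·h(x)/√(1 − x²) dx. -/
open Real MeasureTheory

private lemma cont_G (h : ℝ → ℝ) (hh : ContinuousOn h (Set.Icc (-1 : ℝ) 1)) :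
    Continuous (fun θ : ℝ => h (Real.sin (π * θ)) * Real.sin (π * θ)) := by
  have hs : Continuous (fun θ : ℝ => Real.sin (π * θ)) :=
    Real.continuous_sin.comp (continuous_const.mul continuous_id)
  have h1 : Continuous (fun θ : ℝ => h (Real.sin (π * θ))) :=
    hh.comp_continuous hs (fun θ => ⟨Real.neg_one_le_sin _, Real.sin_le_one _⟩)
  exact h1.mul hs

private lemma periodic_G (h : ℝ → ℝ) :
    Function.Periodic (fun θ : ℝ => h (Real.sin (π * θ)) * Real.sin (π * θ)) 2 := by
  intro θ
  have : π * (θ + 2) = π * θ + 2 * π := by ring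
  simp only [this, Real.sin_add_two_pi]

private lemma image_sin_Ioo :
    (fun θ : ℝ => Real.sin (π * θ)) '' Set.Ioo (-(1:ℝ)/2) (1/2) = Set.Ioo (-1 : ℝ) 1 := by
  ext y
  constructor
  · rintro ⟨θ, hθ, rfl⟩
    have h1 : -(π/2) < π * θ := by nlinarith [Real.pi_pos, hθ.1]
    have h2 : π * θ < π/2 := by nlinarith [Real.pi_pos, hθ.2]
    constructor
    · have := Real.strictMonoOn_sin (Set.left_mem_Icc.2 (by linarith))
        ⟨h1.le, h2.le⟩ h1
      simpa using this
    · have := Real.strictMonoOn_sin ⟨h1.le, h2.le⟩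
        (Set.right_mem_Icc.2 (by linarith)) h2
      simpa using this
  · rintro ⟨hy1, hy2⟩
    refine ⟨Real.arcsin y / π, ⟨?_, ?_⟩, ?_⟩
    · have h4 := Real.neg_pi_div_two_lt_arcsin.2 hy1
      rw [div_lt_div_iff₀ (by norm_num : (0:ℝ) < 2) Real.pi_pos]
      nlinarith [Real.pi_pos]
    · have h4 := Real.arcsin_lt_pi_div_two.2 hy2
      rw [div_lt_div_iff₀ Real.pi_pos (by norm_num : (0:ℝ) < 2)]
      nlinarith [Real.pi_pos]
    · show Real.sin (π * (Real.arcsin y / π)) = y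
      rw [mul_comm, div_mul_cancel₀ _ Real.pi_ne_zero, Real.sin_arcsin hy1.le hy2.le]

/-- Core change of variables: the `a = 1`, half-period case. -/
private lemma core_cov (h : ℝ → ℝ) :
    ∫ x in (-1 : ℝ)..1, x * h x / Real.sqrt (1 - x ^ 2)
      = π * ∫ θ in (-(1:ℝ)/2)..(1/2), h (Real.sin (π * θ)) * Real.sin (π * θ) := by
  have hderiv : ∀ θ ∈ Set.Ioo (-(1:ℝ)/2) (1/2),
      HasDerivWithinAt (fun θ : ℝ => Real.sin (π * θ)) (π * Real.cos (π * θ))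
        (Set.Ioo (-(1:ℝ)/2) (1/2)) θ := by
    intro θ _
    have : HasDerivAt (fun θ : ℝ => Real.sin (π * θ)) (Real.cos (π * θ) * (π * 1)) θ :=
      (Real.hasDerivAt_sin (π * θ)).comp θ ((hasDerivAt_id θ).const_mul π)
    simpa [mul_comm] using this.hasDerivWithinAt
  have hinj : Set.InjOn (fun θ : ℝ => Real.sin (π * θ)) (Set.Ioo (-(1:ℝ)/2) (1/2)) := by
    intro x hx y hy hxy
    have hx' : π * x ∈ Set.Icc (-(π/2)) (π/2) := by
      constructor
      · nlinarith [Real.pi_pos, hx.1]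
      · nlinarith [Real.pi_pos, hx.2]
    have hy' : π * y ∈ Set.Icc (-(π/2)) (π/2) := by
      constructor
      · nlinarith [Real.pi_pos, hy.1]
      · nlinarith [Real.pi_pos, hy.2]
    have := Real.injOn_sin hx' hy' hxy
    exact mul_left_cancel₀ Real.pi_ne_zero this
  have key := MeasureTheory.integral_image_eq_integral_abs_deriv_smul
    (measurableSet_Ioo : MeasurableSet (Set.Ioo (-(1:ℝ)/2) (1/2))) hderiv hinj
    (fun x => x * h x / Real.sqrt (1 - x ^ 2))
  rw [image_sin_Ioo] at key
  have hcongr : ∀ θ ∈ Set.Ioo (-(1:ℝ)/2) (1/2),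
      |π * Real.cos (π * θ)| •
        (Real.sin (π * θ) * h (Real.sin (π * θ)) / Real.sqrt (1 - Real.sin (π * θ) ^ 2))
      = π * (h (Real.sin (π * θ)) * Real.sin (π * θ)) := by
    intro θ hθ
    have hcos : 0 < Real.cos (π * θ) := by
      apply Real.cos_pos_of_mem_Ioo
      constructor
      · nlinarith [Real.pi_pos, hθ.1]
      · nlinarith [Real.pi_pos, hθ.2]
    have hsq : 1 - Real.sin (π * θ) ^ 2 = Real.cos (π * θ) ^ 2 := by
      have := Real.sin_sq_add_cos_sq (π * θ); linarith
    rw [hsq, Real.sqrt_sq hcos.le, abs_of_pos (by positivity)]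
    field_simp
    rw [smul_eq_mul, mul_div_assoc', div_eq_iff hcos.ne']
    ring
  have hint : ∫ θ in Set.Ioo (-(1:ℝ)/2) (1/2),
      |π * Real.cos (π * θ)| •
        (Real.sin (π * θ) * h (Real.sin (π * θ)) / Real.sqrt (1 - Real.sin (π * θ) ^ 2))
      = ∫ θ in Set.Ioo (-(1:ℝ)/2) (1/2),
        π * (h (Real.sin (π * θ)) * Real.sin (π * θ)) :=
    MeasureTheory.setIntegral_congr_fun measurableSet_Ioo hcongr
  rw [intervalIntegral.integral_of_le (by norm_num : (-1:ℝ) ≤ 1),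
    MeasureTheory.integral_Ioc_eq_integral_Ioo, key, hint,
    MeasureTheory.integral_const_mul,
    intervalIntegral.integral_of_le (by norm_num : (-(1:ℝ)/2) ≤ 1/2),
    MeasureTheory.integral_Ioc_eq_integral_Ioo]

/-- Symmetry: integral over `[-1,1]` equals twice the integral over `[-1/2,1/2]`. -/
private lemma symm_step (h : ℝ → ℝ) (hh : ContinuousOn h (Set.Icc (-1 : ℝ) 1)) :
    ∫ θ in (-1 : ℝ)..1, h (Real.sin (π * θ)) * Real.sin (π * θ)
      = 2 * ∫ θ in (-(1:ℝ)/2)..(1/2), h (Real.sin (π * θ)) * Real.sin (π * θ) := by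
  set G : ℝ → ℝ := fun θ => h (Real.sin (π * θ)) * Real.sin (π * θ) with hG
  have hcont : Continuous G := cont_G h hh
  have hper : Function.Periodic G 2 := periodic_G h
  have h1 : ∫ θ in (-1 : ℝ)..1, G θ = ∫ θ in (-(1:ℝ)/2)..(3/2 : ℝ), G θ := by
    have := hper.intervalIntegral_add_eq (-1 : ℝ) (-(1:ℝ)/2)
    norm_num at this ⊢
    convert this using 2 <;> norm_num
  have h2 : ∫ θ in ((1:ℝ)/2)..(3/2 : ℝ), G θ
      = ∫ θ in (-(1:ℝ)/2)..(1/2 : ℝ), G θ := by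
    have hflip : ∀ θ : ℝ, G (1 - θ) = G θ := by
      intro θ
      have : π * (1 - θ) = π - π * θ := by ring
      simp only [hG, this, Real.sin_pi_sub]
    have h3 := intervalIntegral.integral_comp_sub_left (a := (-(1:ℝ)/2)) (b := ((1:ℝ)/2)) G 1
    simp only [hflip] at h3
    norm_num at h3 ⊢
    convert h3.symm using 2 <;> norm_num
  have hsplit : ∫ θ in (-(1:ℝ)/2)..(3/2 : ℝ), G θ
      = (∫ θ in (-(1:ℝ)/2)..(1/2 : ℝ), G θ) + ∫ θ in ((1:ℝ)/2)..(3/2 : ℝ), G θ :=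
    (intervalIntegral.integral_add_adjacent_intervals
      (hcont.intervalIntegrable _ _) (hcont.intervalIntegrable _ _)).symm
  rw [h1, hsplit, h2]; ring

/-- Period reduction in `a`. -/
private lemma period_step (h : ℝ → ℝ) (hh : ContinuousOn h (Set.Icc (-1 : ℝ) 1))
    (a : ℕ) (ha : 0 < a) :
    ∫ θ in (-1 : ℝ)..1, h (Real.sin (π * a * θ)) * Real.sin (π * a * θ)
      = ∫ θ in (-1 : ℝ)..1, h (Real.sin (π * θ)) * Real.sin (π * θ) := by
  set G : ℝ → ℝ := fun θ => h (Real.sin (π * θ)) * Real.sin (π * θ) with hG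
  have hcont : Continuous G := cont_G h hh
  have hper : Function.Periodic G 2 := periodic_G h
  have ha' : (a : ℝ) ≠ 0 := Nat.cast_ne_zero.2 ha.ne'
  have hstep1 : ∫ θ in (-1 : ℝ)..1, h (Real.sin (π * a * θ)) * Real.sin (π * a * θ)
      = ∫ θ in (-1 : ℝ)..1, G ((a : ℝ) * θ) := by
    apply intervalIntegral.integral_congr
    intro θ _
    simp only [hG, mul_assoc]
  rw [hstep1, intervalIntegral.integral_comp_mul_left G ha']
  have hzsmul : ∫ x in (-(a:ℝ))..((a:ℝ)), G x = (a : ℤ) • ∫ x in (-(a:ℝ))..(-(a:ℝ) + 2), G x := by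
    have := hper.intervalIntegral_add_zsmul_eq (a : ℤ) (-(a:ℝ))
      (fun t₁ t₂ => hcont.intervalIntegrable t₁ t₂)
    have heq : -(a:ℝ) + (a : ℤ) • (2:ℝ) = (a:ℝ) := by
      rw [zsmul_eq_mul]
      push_cast
      ring
    rw [heq] at this
    exact this
  have hshift : ∫ x in (-(a:ℝ))..(-(a:ℝ) + 2), G x = ∫ x in (-1 : ℝ)..1, G x := by
    have := hper.intervalIntegral_add_eq (-(a:ℝ)) (-1 : ℝ)
    norm_num at this ⊢
    convert this using 2
  have hb1 : (a:ℝ) * -1 = -(a:ℝ) := by ring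
  have hb2 : (a:ℝ) * 1 = (a:ℝ) := by ring
  rw [hb1, hb2, hzsmul, hshift, zsmul_eq_mul, smul_eq_mul]
  push_cast
  field_simp

/-- Chebyshev coefficient extraction for sine features: for continuous `h` on `[−1,1]`
and a positive integer `a`,
`∫_{−1}^{1} h(sin(π a θ))·sin(π a θ) dθ = (2/π)·∫_{−1}^{1} x·h(x)/√(1−x²) dx`. -/
theorem coefficient_extraction_sin
    (h : ℝ → ℝ) (hh : ContinuousOn h (Set.Icc (-1 : ℝ) 1)) (a : ℕ) (ha : 0 < a) :
    ∫ θ in (-1 : ℝ)..1, h (Real.sin (π * a * θ)) * Real.sin (π * a * θ)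
      = (2 / π) * ∫ x in (-1 : ℝ)..1, x * h x / Real.sqrt (1 - x ^ 2) := by
  rw [period_step h hh a ha, symm_step h hh, core_cov h]
  have hπ : π ≠ 0 := Real.pi_ne_zero
  field_simp
end
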